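/- arXiv:2506.17197 — 3 statements merged into one kernel-verified Lean document; each statement's English description precedes it below -/
import Mathlib

section
/- Let I be a finite set and S ⊆ I nonempty, let E_i be standard Borel spaces, let Q be a σ-finite measure on ∏_{i∈I} E_i, and for each i ∈ S let μ_i be a probability measure on E_i. Suppose Π⁰ is a probability measure on ∏_{i∈I} E_i with Π⁰ ≪ Q such that dΠ⁰/dQ(x) = ∏_{i∈S} f_i(x_i) Q-a.e. for measurable functions f_i : E_i → (0,∞) with log f_i ∈ L¹(μ_i), and such that the marginal of Π⁰ at each i ∈ S equals μ_i. Then KL(Π⁰ ‖ Q) = ∑_{i∈S} ∫ log f_i dμ_i, and every probability measure Π on ∏_{i∈I} E_i with Π ≪ Q, with marginal at each i ∈ S equal to μ_i, and with KL(Π ‖ Q) finite, satisfies KL(Π ‖ Q) ≥ KL(Π⁰ ‖ Q), with equality if and only if Π = Π⁰. -/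
open MeasureTheory ProbabilityTheory Classical

open scoped ENNReal

/-- Kullback-Leibler divergence of a probability measure `μ` with respect to a σ-finite
measure `ν`, valued in `(-∞, +∞]`: `KL(μ‖ν) = ∫ log(dμ/dν) dμ` when `μ ≪ ν` and the
log-likelihood ratio is `μ`-integrable, and `+∞` otherwise. -/
noncomputable def KL {α : Type*} [MeasurableSpace α] (μ ν : Measure α) : EReal :=
  if μ ≪ ν ∧ Integrable (llr μ ν) μ then ((∫ x, llr μ ν x ∂μ : ℝ) : EReal) else ⊤


/-- `x - 1 ≤ x log x` for `x ≥ 0`. -/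
lemma aux_sub_one_le_mul_log {x : ℝ} (hx : 0 ≤ x) : x - 1 ≤ x * Real.log x := by
  rcases hx.eq_or_lt with h | h
  · simp [← h]
  · have h1 : Real.log x⁻¹ ≤ x⁻¹ - 1 := Real.log_le_sub_one_of_pos (inv_pos.mpr h)
    rw [Real.log_inv] at h1
    have h2 := mul_le_mul_of_nonneg_left h1 h.le
    have h3 : x * x⁻¹ = 1 := mul_inv_cancel₀ h.ne'
    nlinarith

/-- strict version for `x ≠ 1`. -/
lemma aux_sub_one_lt_mul_log {x : ℝ} (hx : 0 ≤ x) (hx1 : x ≠ 1) :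
    x - 1 < x * Real.log x := by
  rcases hx.eq_or_lt with h | h
  · simp [← h]
  · have hinv : x⁻¹ ≠ 1 := by simpa [inv_eq_one] using hx1
    have h1 : Real.log x⁻¹ < x⁻¹ - 1 := Real.log_lt_sub_one_of_pos (inv_pos.mpr h) hinv
    rw [Real.log_inv] at h1
    have h2 := mul_lt_mul_of_pos_left h1 h
    have h3 : x * x⁻¹ = 1 := mul_inv_cancel₀ h.ne'
    nlinarith

/-- Gibbs' inequality with equality case. -/
lemma aux_gibbs {α : Type*} [MeasurableSpace α] (P ν : Measure α)
    [IsProbabilityMeasure P] [IsProbabilityMeasure ν]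
    (hPν : P ≪ ν) (h_int : Integrable (llr P ν) P) :
    0 ≤ ∫ x, llr P ν x ∂P ∧ (∫ x, llr P ν x ∂P = 0 ↔ P = ν) := by
  set g : α → ℝ := fun x => (P.rnDeriv ν x).toReal with hg_def
  have hg_nonneg : ∀ x, 0 ≤ g x := fun x => ENNReal.toReal_nonneg
  have h_eq : ∫ x, g x * Real.log (g x) ∂ν = ∫ x, llr P ν x ∂P := by
    rw [← integral_rnDeriv_smul hPν (f := llr P ν)]
    simp [llr, smul_eq_mul, hg_def]
  have h_int' : Integrable (fun x => g x * Real.log (g x)) ν := by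
    have := (integrable_rnDeriv_smul_iff hPν (f := llr P ν)).mpr h_int
    simpa [llr, smul_eq_mul, hg_def] using this
  have h_int_g : Integrable g ν := Measure.integrable_toReal_rnDeriv
  have h1 : Integrable (fun x => g x * Real.log (g x) - g x) ν := h_int'.sub h_int_g
  have h_int_h : Integrable (fun x => g x * Real.log (g x) - g x + 1) ν :=
    h1.add (integrable_const 1)
  have h_g_one : ∫ x, g x ∂ν = 1 := by
    rw [hg_def, Measure.integral_toReal_rnDeriv hPν]; simp
  have h_key : ∫ x, (g x * Real.log (g x) - g x + 1) ∂ν = ∫ x, llr P ν x ∂P := by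
    rw [integral_add h1 (integrable_const 1),
      integral_sub h_int' h_int_g, h_g_one, h_eq]
    simp
  have h_nonneg : ∀ x, 0 ≤ g x * Real.log (g x) - g x + 1 := fun x => by
    have := aux_sub_one_le_mul_log (hg_nonneg x); linarith
  constructor
  · rw [← h_key]
    exact integral_nonneg h_nonneg
  · constructor
    · intro h0
      have h0' : ∫ x, (g x * Real.log (g x) - g x + 1) ∂ν = 0 := by rw [h_key, h0]
      have hae : (fun x => g x * Real.log (g x) - g x + 1) =ᵐ[ν] 0 :=
        (integral_eq_zero_iff_of_nonneg (fun x => h_nonneg x) h_int_h).mp h0'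
      have hg1 : g =ᵐ[ν] fun _ => 1 := by
        filter_upwards [hae] with x hx
        by_contra hne
        have := aux_sub_one_lt_mul_log (hg_nonneg x) hne
        simp only [Pi.zero_apply] at hx
        linarith
      have hrn : P.rnDeriv ν =ᵐ[ν] 1 := by
        filter_upwards [hg1] with x hx
        have := (ENNReal.toReal_eq_one_iff _).mp hx
        simpa using this
      exact (Measure.rnDeriv_eq_one_iff_eq hPν).mp hrn
    · intro h
      subst h
      have : llr P P =ᵐ[P] 0 := by
        filter_upwards [P.rnDeriv_self] with x hx
        simp [llr, hx]
      rw [integral_congr_ae this]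
      simp

/-- A coupling `P⁰` with prescribed marginals `μ i` on `S` whose density with respect to the
reference measure `Q` factorises as a product of positive single-coordinate potentials
`∏_{i ∈ S} f i (x i)` satisfies `KL(P⁰ ‖ Q) = ∑_{i ∈ S} ∫ log f_i dμ_i`, and is the unique
minimiser of `KL(· ‖ Q)` among couplings with the same marginals on `S`, absolutely continuous
with respect to `Q` and with finite KL divergence. -/
theorem kl_min_of_product_density
    {I : Type*} [Fintype I] {E : I → Type*}
    [∀ i, MeasurableSpace (E i)] [∀ i, StandardBorelSpace (E i)]
    (S : Finset I) (hS : S.Nonempty)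
    (Q : Measure (∀ i, E i)) [SigmaFinite Q]
    (μ : ∀ i, Measure (E i)) [∀ i, IsProbabilityMeasure (μ i)]
    (P₀ : Measure (∀ i, E i)) [IsProbabilityMeasure P₀]
    (hac : P₀ ≪ Q)
    (f : ∀ i, E i → ℝ)
    (hf_meas : ∀ i ∈ S, Measurable (f i))
    (hf_pos : ∀ i ∈ S, ∀ y, 0 < f i y)
    (hf_log_int : ∀ i ∈ S, Integrable (fun y => Real.log (f i y)) (μ i))
    (hdens : P₀.rnDeriv Q =ᵐ[Q] fun x => ENNReal.ofReal (∏ i ∈ S, f i (x i)))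
    (hmarg : ∀ i ∈ S, P₀.map (fun x => x i) = μ i) :
    KL P₀ Q = ((∑ i ∈ S, ∫ y, Real.log (f i y) ∂(μ i) : ℝ) : EReal) ∧
      ∀ P : Measure (∀ i, E i), IsProbabilityMeasure P → P ≪ Q →
        (∀ i ∈ S, P.map (fun x => x i) = μ i) → KL P Q ≠ ⊤ →
          KL P₀ Q ≤ KL P Q ∧ (KL P Q = KL P₀ Q ↔ P = P₀) := by
  set c : ℝ := ∑ i ∈ S, ∫ y, Real.log (f i y) ∂(μ i) with hc_def
  set g : (∀ i, E i) → ℝ := fun x => ∑ i ∈ S, Real.log (f i (x i)) with hg_def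
  -- integrability of each term under a measure with the right marginals
  have hterm : ∀ (P : Measure (∀ i, E i)), (∀ i ∈ S, P.map (fun x => x i) = μ i) →
      ∀ i ∈ S, Integrable (fun x => Real.log (f i (x i))) P := by
    intro P hm i hi
    have hmeas : StronglyMeasurable (fun y => Real.log (f i y)) :=
      (Real.measurable_log.comp (hf_meas i hi)).stronglyMeasurable
    have h1 : Integrable (fun y => Real.log (f i y)) (P.map (fun x => x i)) := by
      rw [hm i hi]; exact hf_log_int i hi
    exact (integrable_map_measure (by rw [hm i hi] at h1 ⊢; exact hmeas.aestronglyMeasurable)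
      (measurable_pi_apply i).aemeasurable).mp h1
  have hgint : ∀ (P : Measure (∀ i, E i)), (∀ i ∈ S, P.map (fun x => x i) = μ i) →
      Integrable g P := by
    intro P hm
    exact integrable_finset_sum S (fun i hi => hterm P hm i hi)
  have hgval : ∀ (P : Measure (∀ i, E i)), (∀ i ∈ S, P.map (fun x => x i) = μ i) →
      ∫ x, g x ∂P = c := by
    intro P hm
    rw [hg_def]
    rw [integral_finset_sum S (fun i hi => hterm P hm i hi)]
    refine Finset.sum_congr rfl fun i hi => ?_
    rw [← hm i hi, integral_map (measurable_pi_apply i).aemeasurable]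
    rw [hm i hi]
    exact (Real.measurable_log.comp (hf_meas i hi)).aestronglyMeasurable
  -- llr of P₀ w.r.t. Q
  have hB : llr P₀ Q =ᵐ[P₀] g := by
    filter_upwards [hac.ae_le hdens] with x hx
    have hprod : 0 < ∏ i ∈ S, f i (x i) := Finset.prod_pos fun i hi => hf_pos i hi (x i)
    rw [llr, hx, ENNReal.toReal_ofReal hprod.le,
      Real.log_prod (fun i hi => (hf_pos i hi (x i)).ne')]
  have hB_int : Integrable (llr P₀ Q) P₀ := (integrable_congr hB).mpr (hgint P₀ hmarg)
  have hB_val : ∫ x, llr P₀ Q x ∂P₀ = c := by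
    rw [integral_congr_ae hB]; exact hgval P₀ hmarg
  have hKL0 : KL P₀ Q = (c : EReal) := by
    rw [KL, if_pos ⟨hac, hB_int⟩, hB_val]
  -- Q ≪ P₀
  have hQP₀ : Q ≪ P₀ := by
    have h1 : Q ≪ Q.withDensity (P₀.rnDeriv Q) := by
      refine withDensity_absolutelyContinuous' (P₀.measurable_rnDeriv Q).aemeasurable ?_
      filter_upwards [hdens] with x hx
      rw [hx]
      exact (ENNReal.ofReal_pos.mpr (Finset.prod_pos fun i hi => hf_pos i hi (x i))).ne'
    rwa [Measure.withDensity_rnDeriv_eq _ _ hac] at h1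
  refine ⟨hKL0, ?_⟩
  intro P hP hPQ hm hfin
  have hc2 : P ≪ Q ∧ Integrable (llr P Q) P := by
    by_contra h
    rw [KL, if_neg h] at hfin
    exact hfin rfl
  have hPP₀ : P ≪ P₀ := hPQ.trans hQP₀
  -- chain rule
  have hchain : llr P Q =ᵐ[P] fun x => llr P P₀ x + g x := by
    have h1 : P.rnDeriv P₀ * P₀.rnDeriv Q =ᵐ[Q] P.rnDeriv Q :=
      Measure.rnDeriv_mul_rnDeriv hPP₀
    filter_upwards [hPQ.ae_le h1, hPQ.ae_le hdens, Measure.rnDeriv_pos hPP₀,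
      hPP₀.ae_le (Measure.rnDeriv_lt_top P P₀)] with x hx1 hx2 hpos hlt
    have hprod : 0 < ∏ i ∈ S, f i (x i) := Finset.prod_pos fun i hi => hf_pos i hi (x i)
    have hne : ((P.rnDeriv P₀ x).toReal : ℝ) ≠ 0 :=
      (ENNReal.toReal_pos hpos.ne' hlt.ne).ne'
    rw [llr, ← hx1, Pi.mul_apply, hx2, ENNReal.toReal_mul, ENNReal.toReal_ofReal hprod.le,
      Real.log_mul hne hprod.ne',
      Real.log_prod (fun i hi => (hf_pos i hi (x i)).ne')]
    rfl
  have hint2 : Integrable (llr P P₀) P := by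
    have heq : llr P P₀ =ᵐ[P] fun x => llr P Q x - g x := by
      filter_upwards [hchain] with x hx
      rw [hx]; ring
    exact (integrable_congr heq).mpr (hc2.2.sub (hgint P hm))
  have hval : ∫ x, llr P Q x ∂P = ∫ x, llr P P₀ x ∂P + c := by
    rw [integral_congr_ae hchain, integral_add hint2 (hgint P hm), hgval P hm]
  obtain ⟨hGnn, hGeq⟩ := aux_gibbs P P₀ hPP₀ hint2
  have hKLP : KL P Q = ((∫ x, llr P P₀ x ∂P + c : ℝ) : EReal) := by
    rw [KL, if_pos hc2, hval]
  constructor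
  · rw [hKL0, hKLP, EReal.coe_le_coe_iff]
    linarith
  · rw [hKL0, hKLP]
    rw [show ((∫ x, llr P P₀ x ∂P + c : ℝ) : EReal) = (c : EReal) ↔
        (∫ x, llr P P₀ x ∂P + c : ℝ) = c from EReal.coe_eq_coe_iff]
    constructor
    · intro h
      exact hGeq.mp (by linarith)
    · intro h
      have := hGeq.mpr h
      rw [this]; ring_nf
end

section
/- Let V be a finite set, S ⊆ V nonempty, and let Q be a σ-finite measure on (ℝ^d)^V which is mutually absolutely continuous with Lebesgue measure. For each i ∈ S let μ_i be a probability measure on ℝ^d. Suppose Π is a probability measure on (ℝ^d)^V with Π ≪ Q, KL(Π ‖ Q) finite, marginal at each i ∈ S equal to μ_i, and such that its density factorises in both of the following ways Q-a.e.: dΠ/dQ(x) = ∏_{v∈V} g_v(x_v) for measurable functions g_v : ℝ^d → [0,∞) with log g_i ∈ L¹(μ_i) for each i ∈ S, and dΠ/dQ(x) = h((x_i)_{i∈S}) for a measurable function h : (ℝ^d)^S → [0,∞). Then Π is the unique minimiser of KL(· ‖ Q) over probability measures Π' on (ℝ^d)^V with Π' ≪ Q, KL(Π' ‖ Q) finite,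 and marginal at each i ∈ S equal to μ_i; that is, every such Π' satisfies KL(Π' ‖ Q) ≥ KL(Π ‖ Q), with equality only if Π' = Π. -/
open MeasureTheory ProbabilityTheory Classical

open scoped ENNReal

section GibbsAux

open Real

lemma gibbs_aux {α : Type*} [MeasurableSpace α] (μ ν : Measure α)
    [IsProbabilityMeasure μ] [IsProbabilityMeasure ν] (hμν : μ ≪ ν)
    (hint : Integrable (llr μ ν) μ) :
    0 ≤ ∫ x, llr μ ν x ∂μ ∧ (∫ x, llr μ ν x ∂μ = 0 → μ = ν) := by
  set I := ∫ x, llr μ ν x ∂μ with hI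
  have hexp : (fun x ↦ exp (-(llr μ ν x))) =ᵐ[μ] fun x ↦ (ν.rnDeriv μ x).toReal := by
    simpa using exp_neg_llr hμν
  have hgi : Integrable (fun x ↦ exp (-(llr μ ν x))) μ :=
    (Measure.integrable_toReal_rnDeriv).congr hexp.symm
  have hle1 : ∫ x, exp (-(llr μ ν x)) ∂μ ≤ 1 := by
    rw [integral_congr_ae hexp]
    calc ∫ x, (ν.rnDeriv μ x).toReal ∂μ
        = ∫ x in Set.univ, (ν.rnDeriv μ x).toReal ∂μ := by rw [setIntegral_univ]
      _ ≤ (ν Set.univ).toReal := Measure.setIntegral_toReal_rnDeriv_le (measure_ne_top ν _)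
      _ = 1 := by simp
  have havg : ⨍ x, (-llr μ ν) x ∂μ = -I := by
    simp only [Pi.neg_apply]
    rw [average_eq_integral, integral_neg]
  have hjensen := strictConvexOn_exp.ae_eq_const_or_map_average_lt continuous_exp.continuousOn
    isClosed_univ (Filter.Eventually.of_forall (fun x => Set.mem_univ _)) hint.neg hgi
  rcases hjensen with hconst | hlt
  · rw [havg] at hconst
    have hieq : ∫ x, exp (-(llr μ ν x)) ∂μ = exp (-I) := by
      have h2 := integral_congr_ae (hconst.fun_comp exp)
      simpa [Function.comp, Function.const] using h2
    have hexpI : exp (-I) ≤ 1 := hieq ▸ hle1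
    have hInn : 0 ≤ I := by
      have := exp_le_one_iff.mp hexpI; linarith
    refine ⟨hInn, fun hI0 => ?_⟩
    have hz : llr μ ν =ᵐ[μ] fun _ => 0 := by
      filter_upwards [hconst] with x hx
      simp only [Pi.neg_apply, Function.const_apply, hI0, neg_zero, neg_eq_zero] at hx
      exact hx
    have h_one : ∀ᵐ x ∂μ, μ.rnDeriv ν x = 1 := by
      filter_upwards [hz, Measure.rnDeriv_pos hμν, hμν.ae_le (Measure.rnDeriv_lt_top μ ν)]
        with x h0 hpos hlt
      have hpos' : 0 < (μ.rnDeriv ν x).toReal := ENNReal.toReal_pos hpos.ne' hlt.ne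
      have h0' : Real.log (μ.rnDeriv ν x).toReal = 0 := h0
      have ht : (μ.rnDeriv ν x).toReal = 1 := by
        rcases Real.log_eq_zero.mp h0' with h | h | h
        · linarith
        · exact h
        · linarith
      rwa [ENNReal.toReal_eq_one_iff] at ht
    set B := {x | μ.rnDeriv ν x = 1} with hB
    have hBm : MeasurableSet B := Measure.measurable_rnDeriv μ ν (measurableSet_singleton 1)
    have hμBc : μ Bᶜ = 0 := by
      have := ae_iff.mp h_one
      simpa [hB, Set.compl_setOf] using this
    have hνB : ν B = 1 := by
      have h1 : ∫⁻ x, μ.rnDeriv ν x ∂ν = 1 := by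
        rw [Measure.lintegral_rnDeriv hμν]; simp
      have h2 : ∫⁻ x in Bᶜ, μ.rnDeriv ν x ∂ν = 0 := by
        rw [Measure.setLIntegral_rnDeriv hμν]; exact hμBc
      have h3 : ∫⁻ x in B, μ.rnDeriv ν x ∂ν = ν B := by
        rw [setLIntegral_congr_fun hBm (fun x hx => hx)]
        simp
      have h4 := lintegral_add_compl (μ.rnDeriv ν) hBm (μ := ν)
      rw [h2, h3, add_zero] at h4
      rw [h4, h1]
    have hνBc : ν Bᶜ = 0 := by
      rw [measure_compl hBm (measure_ne_top ν B), hνB]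
      simp
    have hrn1 : μ.rnDeriv ν =ᵐ[ν] fun _ => 1 := by
      rw [Filter.EventuallyEq, ae_iff]
      simpa [hB, Set.compl_setOf] using hνBc
    calc μ = ν.withDensity (μ.rnDeriv ν) := (Measure.withDensity_rnDeriv_eq μ ν hμν).symm
      _ = ν.withDensity (fun _ => 1) := withDensity_congr_ae hrn1
      _ = ν := by simp
  · rw [havg, average_eq_integral] at hlt
    have hlt1 : exp (-I) < 1 := lt_of_lt_of_le hlt hle1
    have : 0 < I := by
      have := exp_lt_one_iff.mp hlt1
      linarith
    exact ⟨this.le, fun h0 => absurd h0 (by linarith)⟩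

end GibbsAux

/-- **Static TreeSB characterisation.** A coupling `P` with correct marginals `μ i` on `S` and
finite KL divergence whose density with respect to `Q` factorises simultaneously as a product
of single-vertex potentials `∏_{v ∈ V} g v (x v)` (Markov factorisation) and as a function
`h ((x i)_{i ∈ S})` of the coordinates in `S` only (reciprocal factorisation) is the unique
minimiser of `KL(· ‖ Q)` over couplings with marginals `μ i` on `S`, absolutely continuous
with respect to `Q` and with finite KL divergence. -/
theorem static_treeSB_characterisation
    {V : Type*} [Fintype V] (d : ℕ) (S : Finset V) (hS : S.Nonempty)
    (Q : Measure (V → Fin d → ℝ)) [SigmaFinite Q]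
    (hQ_ac : Q ≪ volume) (hQ_ac' : (volume : Measure (V → Fin d → ℝ)) ≪ Q)
    (μ : V → Measure (Fin d → ℝ)) (hμ : ∀ i ∈ S, IsProbabilityMeasure (μ i))
    (P : Measure (V → Fin d → ℝ)) [IsProbabilityMeasure P]
    (hac : P ≪ Q)
    (hfin : KL P Q ≠ ⊤)
    (hmarg : ∀ i ∈ S, P.map (fun x => x i) = μ i)
    (g : V → (Fin d → ℝ) → ℝ)
    (hg_meas : ∀ v, Measurable (g v))
    (hg_nonneg : ∀ v y, 0 ≤ g v y)
    (hg_log_int : ∀ i ∈ S, Integrable (fun y => Real.log (g i y)) (μ i))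
    (hdens_markov : P.rnDeriv Q =ᵐ[Q] fun x => ENNReal.ofReal (∏ v, g v (x v)))
    (h : ({i // i ∈ S} → Fin d → ℝ) → ℝ)
    (hh_meas : Measurable h)
    (hh_nonneg : ∀ z, 0 ≤ h z)
    (hdens_reciprocal : P.rnDeriv Q =ᵐ[Q] fun x => ENNReal.ofReal (h (fun i => x i.1))) :
    ∀ P' : Measure (V → Fin d → ℝ), IsProbabilityMeasure P' → P' ≪ Q → KL P' Q ≠ ⊤ →
      (∀ i ∈ S, P'.map (fun x => x i) = μ i) →
        KL P Q ≤ KL P' Q ∧ (KL P' Q = KL P Q → P' = P) := by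
  classical
  letI instS : Fintype {v // v ∈ S} := Subtype.fintype fun v => v ∈ S
  letI instSc : Fintype {v // ¬ v ∈ S} := Subtype.fintype fun v => ¬ v ∈ S
  have hint_P : Integrable (llr P Q) P := by
    by_contra hi
    exact hfin (by rw [KL, if_neg (fun h' => hi h'.2)])
  have hKLP : KL P Q = ((∫ x, llr P Q x ∂P : ℝ) : EReal) := by
    rw [KL, if_pos ⟨hac, hint_P⟩]
  -- the splitting equivalence
  let e := MeasurableEquiv.piEquivPiSubtypeProd (fun _ : V => (Fin d → ℝ)) (fun v => v ∈ S)
  have hmp : MeasurePreserving e volume volume :=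
    volume_preserving_piEquivPiSubtypeProd (fun _ : V => (Fin d → ℝ)) (fun v => v ∈ S)
  set G : ({v // v ∈ S} → Fin d → ℝ) → ℝ := fun y => ∏ i, g i.1 (y i) with hG
  set F : ({v // ¬ v ∈ S} → Fin d → ℝ) → ℝ := fun z => ∏ j, g j.1 (z j) with hF
  have hGmeas : Measurable G :=
    Finset.measurable_prod _ fun i _ => (hg_meas i.1).comp (measurable_pi_apply i)
  have hFmeas : Measurable F :=
    Finset.measurable_prod _ fun j _ => (hg_meas j.1).comp (measurable_pi_apply j)
  have hGnonneg : ∀ y, 0 ≤ G y := fun y => Finset.prod_nonneg fun i _ => hg_nonneg _ _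
  have hFnonneg : ∀ z, 0 ≤ F z := fun z => Finset.prod_nonneg fun j _ => hg_nonneg _ _
  have hprod_eq : ∀ x : V → Fin d → ℝ,
      (∏ v, g v (x v)) = G (fun i => x i.1) * F (fun j => x j.1) := fun x =>
    (Fintype.prod_subtype_mul_prod_subtype (fun v => v ∈ S) (fun v => g v (x v))).symm
  -- a.e.-Q equality of the two real densities
  have hdens_eq : ∀ᵐ x ∂Q, (∏ v, g v (x v)) = h (fun i => x i.1) := by
    filter_upwards [hdens_markov, hdens_reciprocal] with x h1 h2
    have h3 : ENNReal.ofReal (∏ v, g v (x v)) = ENNReal.ofReal (h fun i => x i.1) := by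
      rw [← h1, h2]
    exact (ENNReal.ofReal_eq_ofReal_iff
      (Finset.prod_nonneg fun v _ => hg_nonneg _ _) (hh_nonneg _)).mp h3
  -- the density is not a.e. zero
  have hnotzero : ¬ (∀ᵐ x ∂Q, (∏ v, g v (x v)) = 0) := by
    intro hz
    have h0 : ∫⁻ x, P.rnDeriv Q x ∂Q = 0 := by
      calc ∫⁻ x, P.rnDeriv Q x ∂Q
          = ∫⁻ x, ENNReal.ofReal (∏ v, g v (x v)) ∂Q := lintegral_congr_ae hdens_markov
        _ = ∫⁻ x, 0 ∂Q := lintegral_congr_ae (hz.mono fun x hx => by simp [hx])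
        _ = 0 := lintegral_zero
    rw [Measure.lintegral_rnDeriv hac] at h0
    simp at h0
  -- transfer to the product space
  have hvol_eq : ∀ᵐ x ∂(volume : Measure (V → Fin d → ℝ)),
      G (fun i => x i.1) * F (fun j => x j.1) = h (fun i => x i.1) := by
    filter_upwards [hQ_ac'.ae_le hdens_eq] with x hx
    rw [← hprod_eq x]; exact hx
  have hprod_ae : ∀ᵐ yz ∂((volume : Measure ({v // v ∈ S} → Fin d → ℝ)).prod
      (volume : Measure ({v // ¬ v ∈ S} → Fin d → ℝ))), G yz.1 * F yz.2 = h yz.1 := by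
    have hmeas_set : MeasurableSet {yz : ({v // v ∈ S} → Fin d → ℝ) ×
        ({v // ¬ v ∈ S} → Fin d → ℝ) | G yz.1 * F yz.2 = h yz.1} :=
      measurableSet_eq_fun ((hGmeas.comp measurable_fst).mul (hFmeas.comp measurable_snd))
        (hh_meas.comp measurable_fst)
    rw [← MeasureTheory.Measure.volume_eq_prod, ← hmp.map_eq,
      ae_map_iff e.measurable.aemeasurable hmeas_set]
    filter_upwards [hvol_eq] with x hx
    exact hx
  have hfub : ∀ᵐ y ∂(volume : Measure ({v // v ∈ S} → Fin d → ℝ)),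
      ∀ᵐ z ∂(volume : Measure ({v // ¬ v ∈ S} → Fin d → ℝ)), G y * F z = h y :=
    Measure.ae_ae_of_ae_prod hprod_ae
  have htrans : ∀ (T : Set (({v // v ∈ S} → Fin d → ℝ) × ({v // ¬ v ∈ S} → Fin d → ℝ))),
      MeasurableSet T →
      (∀ᵐ yz ∂((volume : Measure ({v // v ∈ S} → Fin d → ℝ)).prod
        (volume : Measure ({v // ¬ v ∈ S} → Fin d → ℝ))), yz ∈ T) →
      ∀ᵐ x ∂(volume : Measure (V → Fin d → ℝ)), e x ∈ T := by
    intro T hT hae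
    rw [← MeasureTheory.Measure.volume_eq_prod, ← hmp.map_eq] at hae
    exact (ae_map_iff e.measurable.aemeasurable hT).mp hae
  -- G is not a.e. zero
  have hGnotzero : ¬ (∀ᵐ y ∂(volume : Measure ({v // v ∈ S} → Fin d → ℝ)), G y = 0) := by
    intro hz
    apply hnotzero
    have hzp : ∀ᵐ yz ∂((volume : Measure ({v // v ∈ S} → Fin d → ℝ)).prod
        (volume : Measure ({v // ¬ v ∈ S} → Fin d → ℝ))), G yz.1 = 0 := by
      rw [ae_iff]
      have hseteq : {yz : ({v // v ∈ S} → Fin d → ℝ) × ({v // ¬ v ∈ S} → Fin d → ℝ) |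
          ¬ G yz.1 = 0} = {y | ¬ G y = 0} ×ˢ Set.univ := by
        ext ⟨y, z⟩; simp
      rw [hseteq, Measure.prod_prod]
      rw [ae_iff] at hz
      rw [hz, zero_mul]
    have hz' : ∀ᵐ x ∂(volume : Measure (V → Fin d → ℝ)), G (fun i => x i.1) = 0 := by
      have hT : MeasurableSet {yz : ({v // v ∈ S} → Fin d → ℝ) ×
          ({v // ¬ v ∈ S} → Fin d → ℝ) | G yz.1 = 0} :=
        measurableSet_eq_fun (hGmeas.comp measurable_fst) measurable_const
      filter_upwards [htrans _ hT hzp] with x hx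
      exact hx
    filter_upwards [hQ_ac.ae_le hz'] with x hx
    rw [hprod_eq x, hx, zero_mul]
  -- find y₀ where G y₀ ≠ 0 and the fibre identity holds
  have hexists : ∃ y0, G y0 ≠ 0 ∧
      ∀ᵐ z ∂(volume : Measure ({v // ¬ v ∈ S} → Fin d → ℝ)), G y0 * F z = h y0 := by
    by_contra hcon
    push_neg at hcon
    apply hGnotzero
    filter_upwards [hfub] with y hy
    by_contra hGy
    exact hcon y hGy (hy.mono fun z hz => not_not.mpr hz)
  obtain ⟨y0, hy0, hz0⟩ := hexists
  set c : ℝ := h y0 / G y0 with hc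
  have hG0pos : 0 < G y0 := lt_of_le_of_ne (hGnonneg y0) (Ne.symm hy0)
  have hcnonneg : 0 ≤ c := div_nonneg (hh_nonneg y0) hG0pos.le
  have hFc : ∀ᵐ z ∂(volume : Measure ({v // ¬ v ∈ S} → Fin d → ℝ)), F z = c := by
    filter_upwards [hz0] with z hz
    rw [hc, eq_div_iff hy0, mul_comm]
    exact hz
  -- density is c * G a.e. Q
  have hdensC : ∀ᵐ x ∂Q, (∏ v, g v (x v)) = c * G (fun i => x i.1) := by
    have hFc2 : ∀ᵐ yz ∂((volume : Measure ({v // v ∈ S} → Fin d → ℝ)).prod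
        (volume : Measure ({v // ¬ v ∈ S} → Fin d → ℝ))), F yz.2 = c := by
      rw [ae_iff]
      have hseteq : {yz : ({v // v ∈ S} → Fin d → ℝ) × ({v // ¬ v ∈ S} → Fin d → ℝ) |
          ¬ F yz.2 = c} = Set.univ ×ˢ {z | ¬ F z = c} := by
        ext ⟨y, z⟩; simp
      rw [hseteq, Measure.prod_prod]
      rw [ae_iff] at hFc
      rw [hFc, mul_zero]
    have hFc' : ∀ᵐ x ∂(volume : Measure (V → Fin d → ℝ)), F (fun j => x j.1) = c := by
      have hT : MeasurableSet {yz : ({v // v ∈ S} → Fin d → ℝ) ×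
          ({v // ¬ v ∈ S} → Fin d → ℝ) | F yz.2 = c} :=
        measurableSet_eq_fun (hFmeas.comp measurable_snd) measurable_const
      filter_upwards [htrans _ hT hFc2] with x hx
      exact hx
    filter_upwards [hQ_ac.ae_le hFc'] with x hx
    rw [hprod_eq x, hx, mul_comm]
  have hrnC : P.rnDeriv Q =ᵐ[Q] fun x => ENNReal.ofReal (c * G (fun i => x i.1)) := by
    filter_upwards [hdens_markov, hdensC] with x h1 h2
    rw [h1, h2]
  -- c is positive
  have hcpos : 0 < c := by
    rcases hcnonneg.lt_or_eq with hlt | heq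
    · exact hlt
    · exfalso
      apply hnotzero
      filter_upwards [hdensC] with x hx
      rw [hx, ← heq, zero_mul]
  -- factors positive a.e. P
  have hgpos_P : ∀ᵐ x ∂P, ∀ v : V, g v (x v) ≠ 0 := by
    filter_upwards [Measure.rnDeriv_pos hac, hac.ae_le hdens_markov] with x hpos heq
    rw [heq] at hpos
    have hprodpos : (∏ v, g v (x v)) ≠ 0 := by
      intro h0
      rw [h0] at hpos
      simp at hpos
    exact fun v => Finset.prod_ne_zero_iff.mp hprodpos v (Finset.mem_univ v)
  have hμpos : ∀ i ∈ S, ∀ᵐ y ∂(μ i), ¬ g i y = 0 := by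
    intro i hi
    have hmeasY : MeasurableSet {y : Fin d → ℝ | ¬ g i y = 0} :=
      ((hg_meas i) (measurableSet_singleton 0)).compl
    have h1 : ∀ᵐ x ∂P, ¬ g i (x i) = 0 := by
      filter_upwards [hgpos_P] with x hx using hx i
    have h2 := (ae_map_iff (f := fun x : V → Fin d → ℝ => x i)
      (measurable_pi_apply i).aemeasurable hmeasY).mpr h1
    rwa [hmarg i hi] at h2
  -- positivity of G along marginals
  have keyG : ∀ (R : Measure (V → Fin d → ℝ)),
      (∀ i ∈ S, R.map (fun x => x i) = μ i) →
      (∀ᵐ x ∂ R, ∀ i : {v // v ∈ S}, g i.1 (x i.1) ≠ 0) := by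
    intro R hRmarg
    rw [ae_all_iff]
    intro i
    have hmeasY : MeasurableSet {y : Fin d → ℝ | ¬ g i.1 y = 0} :=
      ((hg_meas i.1) (measurableSet_singleton 0)).compl
    have h1 : ∀ᵐ y ∂(R.map (fun x => x i.1)), ¬ g i.1 y = 0 := by
      rw [hRmarg i.1 i.2]; exact hμpos i.1 i.2
    exact (ae_map_iff (f := fun x : V → Fin d → ℝ => x i.1)
      (measurable_pi_apply i.1).aemeasurable hmeasY).mp h1
  have keyGpos : ∀ (R : Measure (V → Fin d → ℝ)),
      (∀ i ∈ S, R.map (fun x => x i) = μ i) →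
      (∀ᵐ x ∂ R, 0 < G (fun i => x i.1)) := by
    intro R hRmarg
    filter_upwards [keyG R hRmarg] with x hx
    exact Finset.prod_pos fun i _ => (hg_nonneg i.1 _).lt_of_ne' (hx i)
  -- the log-density integral depends only on the marginals
  have key : ∀ (R : Measure (V → Fin d → ℝ)), IsProbabilityMeasure R → R ≪ Q →
      (∀ i ∈ S, R.map (fun x => x i) = μ i) →
      Integrable (llr P Q) R ∧
      ∫ x, llr P Q x ∂ R
        = Real.log c + ∑ i : {v // v ∈ S}, ∫ y, Real.log (g i.1 y) ∂(μ i.1) := by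
    intro R hRprob hRQ hRmarg
    haveI := hRprob
    have hllr_eq : llr P Q =ᵐ[R]
        fun x => Real.log c + ∑ i : {v // v ∈ S}, Real.log (g i.1 (x i.1)) := by
      filter_upwards [hRQ.ae_le hrnC, keyGpos R hRmarg, keyG R hRmarg] with x h1 h2 h3
      have hllr : llr P Q x = Real.log ((P.rnDeriv Q x)).toReal := rfl
      rw [hllr, h1, ENNReal.toReal_ofReal (by positivity),
        Real.log_mul hcpos.ne' h2.ne', hG, Real.log_prod (fun i _ => h3 i)]
    have hint_i : ∀ i : {v // v ∈ S},
        Integrable (fun x : V → Fin d → ℝ => Real.log (g i.1 (x i.1))) R := by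
      intro i
      have h1 : Integrable (fun y => Real.log (g i.1 y)) (R.map (fun x => x i.1)) := by
        rw [hRmarg i.1 i.2]; exact hg_log_int i.1 i.2
      have hsm : AEStronglyMeasurable (fun y => Real.log (g i.1 y))
          (R.map (fun x => x i.1)) :=
        (Real.measurable_log.comp (hg_meas i.1)).aestronglyMeasurable
      rw [integrable_map_measure hsm (measurable_pi_apply i.1).aemeasurable] at h1
      exact h1
    have hintsum : Integrable
        (fun x : V → Fin d → ℝ =>
          Real.log c + ∑ i : {v // v ∈ S}, Real.log (g i.1 (x i.1))) R :=
      (integrable_const _).add (integrable_finset_sum _ fun i _ => hint_i i)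
    refine ⟨hintsum.congr hllr_eq.symm, ?_⟩
    rw [integral_congr_ae hllr_eq,
      integral_add (integrable_const _) (integrable_finset_sum _ fun i _ => hint_i i),
      integral_const, integral_finset_sum _ (fun i _ => hint_i i)]
    simp only [probReal_univ, smul_eq_mul, one_mul]
    congr 1
    refine Finset.sum_congr rfl fun i _ => ?_
    have hsm : AEStronglyMeasurable (fun y => Real.log (g i.1 y))
        (R.map (fun x => x i.1)) :=
      (Real.measurable_log.comp (hg_meas i.1)).aestronglyMeasurable
    have hmapint := integral_map (μ := R) (φ := fun x : V → Fin d → ℝ => x i.1)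
      (measurable_pi_apply i.1).aemeasurable hsm
    rw [hRmarg i.1 i.2] at hmapint
    exact hmapint.symm
  obtain ⟨-, hval_P⟩ := key P ‹_› hac hmarg
  -- main conclusion
  intro P' hP'prob hP'Q hfin' hP'marg
  haveI := hP'prob
  have hint_P' : Integrable (llr P' Q) P' := by
    by_contra hi
    exact hfin' (by rw [KL, if_neg (fun h' => hi h'.2)])
  have hKLP' : KL P' Q = ((∫ x, llr P' Q x ∂P' : ℝ) : EReal) := by
    rw [KL, if_pos ⟨hP'Q, hint_P'⟩]
  obtain ⟨hint_PQ_P', hval_P'⟩ := key P' hP'prob hP'Q hP'marg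
  -- P' ≪ P
  have hP'P : P' ≪ P := by
    intro s hs
    have hts : s ⊆ toMeasurable P s := subset_toMeasurable P s
    have ht : MeasurableSet (toMeasurable P s) := measurableSet_toMeasurable P s
    have hPt : P (toMeasurable P s) = 0 := by rw [measure_toMeasurable]; exact hs
    have h00 : ∫⁻ x in toMeasurable P s, P.rnDeriv Q x ∂Q = 0 := by
      rw [Measure.setLIntegral_rnDeriv hac]; exact hPt
    have h0 : P.rnDeriv Q =ᵐ[Q.restrict (toMeasurable P s)] 0 :=
      (lintegral_eq_zero_iff (Measure.measurable_rnDeriv P Q)).mp h00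
    have h0' : ∀ᵐ x ∂Q, x ∈ toMeasurable P s → P.rnDeriv Q x = 0 :=
      (ae_restrict_iff' ht).mp (h0.mono fun x hx => hx)
    have hpos : ∀ᵐ x ∂P', 0 < P.rnDeriv Q x := by
      filter_upwards [hP'Q.ae_le hrnC, keyGpos P' hP'marg] with x h1 h2
      rw [h1]
      exact ENNReal.ofReal_pos.mpr (by positivity)
    have hnotin : ∀ᵐ x ∂P', x ∉ toMeasurable P s := by
      filter_upwards [hP'Q.ae_le h0', hpos] with x hx hposx
      intro hmem
      rw [hx hmem] at hposx
      exact lt_irrefl _ hposx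
    have hP't : P' (toMeasurable P s) = 0 := by
      have := ae_iff.mp hnotin
      simpa using this
    exact measure_mono_null hts hP't
  -- chain rule
  have hchain : llr P' Q =ᵐ[P'] fun x => llr P' P x + llr P Q x := by
    have hmul := Measure.rnDeriv_mul_rnDeriv hP'P (κ := Q)
    filter_upwards [hP'Q.ae_le hmul, Measure.rnDeriv_pos hP'P,
      hP'P.ae_le (Measure.rnDeriv_pos hac), hP'P.ae_le (Measure.rnDeriv_lt_top P' P),
      hP'Q.ae_le (Measure.rnDeriv_lt_top P Q)] with x hx h1 h2 h3 h4
    have hllr : llr P' Q x = Real.log ((P'.rnDeriv Q x)).toReal := rfl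
    rw [hllr, ← hx, Pi.mul_apply, ENNReal.toReal_mul,
      Real.log_mul (ENNReal.toReal_pos h1.ne' h3.ne).ne' (ENNReal.toReal_pos h2.ne' h4.ne).ne']
    rfl
  have hint_P'P : Integrable (llr P' P) P' := by
    have hsub : Integrable (fun x => llr P' Q x - llr P Q x) P' := hint_P'.sub hint_PQ_P'
    apply hsub.congr
    filter_upwards [hchain] with x hx
    rw [hx]; ring
  have hsum : ∫ x, llr P' Q x ∂P' = ∫ x, llr P' P x ∂P' + ∫ x, llr P Q x ∂P' := by
    rw [integral_congr_ae hchain, integral_add hint_P'P hint_PQ_P']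
  obtain ⟨hnn, heqcase⟩ := gibbs_aux P' P hP'P hint_P'P
  have hvv : ∫ x, llr P Q x ∂P' = ∫ x, llr P Q x ∂P := by rw [hval_P', hval_P]
  constructor
  · rw [hKLP, hKLP', EReal.coe_le_coe_iff]
    rw [hsum, hvv]
    linarith
  · intro heq
    rw [hKLP, hKLP'] at heq
    have heqR : ∫ x, llr P' Q x ∂P' = ∫ x, llr P Q x ∂P := by
      exact_mod_cast heq
    have h0 : ∫ x, llr P' P x ∂P' = 0 := by
      rw [hsum, hvv] at heqR
      linarith
    exact heqcase h0
end

section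
/- Let d ≥ 1, let S be a finite nonempty set, let Q be a σ-finite measure on (ℝ^d)^S, and let B : ℝ^d → [0,∞) be measurable with z_B := ∫ exp(−∑_{i∈S} B(x_i)) dQ(x) ∈ (0,∞). Define the probability measure Q^B on (ℝ^d)^S by dQ^B/dQ(x) = z_B^{-1} exp(−∑_{i∈S} B(x_i)). Then for every probability measure Π on (ℝ^d)^S with Π ≪ Q whose marginal at each i ∈ S equals a probability measure μ_i satisfying ∫ B dμ_i < ∞, the integral ∫ log(dΠ/dQ) dΠ is well-defined in (−∞,+∞] and KL(Π ‖ Q) = KL(Π ‖ Q^B) − ∑_{i∈S} ∫ B dμ_i − log z_B. -/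
open MeasureTheory ProbabilityTheory Classical

open scoped ENNReal

lemma aux_mul_max_le {t : ℝ} (ht : 0 ≤ t) : t * max (-(Real.log t)) 0 ≤ 1 := by
  rcases le_or_gt 1 t with h1 | h1
  · have : Real.log t ≥ 0 := Real.log_nonneg h1
    rw [max_eq_right (by linarith)]
    simp
  · rcases eq_or_lt_of_le ht with h0 | h0
    · simp [← h0]
    · have hinv : -(Real.log t) = Real.log t⁻¹ := (Real.log_inv t).symm
      have hle : Real.log t⁻¹ ≤ t⁻¹ - 1 := Real.log_le_sub_one_of_pos (by positivity)
      have hmax : max (-(Real.log t)) 0 ≤ max (t⁻¹ - 1) 0 := by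
        rw [hinv]; exact max_le_max hle le_rfl
      have h2 : t * max (t⁻¹ - 1) 0 ≤ 1 := by
        rcases le_total (t⁻¹ - 1) 0 with h | h
        · rw [max_eq_right h]; simp
        · rw [max_eq_left h, mul_sub, mul_inv_cancel₀ h0.ne']
          nlinarith
      calc t * max (-(Real.log t)) 0 ≤ t * max (t⁻¹ - 1) 0 :=
            mul_le_mul_of_nonneg_left hmax ht
        _ ≤ 1 := h2

lemma aux_abs_min_sub (a c : ℝ) : |min (a - c) 0| ≤ |min a 0| + |c| := by
  have h1 : min (a - c) 0 ≤ 0 := min_le_right _ _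
  rw [abs_of_nonpos h1]
  rcases le_total (a - c) 0 with h | h
  · rw [min_eq_left h]
    rcases le_total a 0 with ha | ha
    · rw [abs_of_nonpos (min_le_right a 0), min_eq_left ha]
      cases abs_cases c <;> linarith
    · rw [min_eq_right ha, abs_zero]
      cases abs_cases c <;> linarith
  · rw [min_eq_right h, neg_zero]
    positivity

/-- Change of reference measure for KL: with `Q^B` the probability measure with density
`z_B⁻¹ exp(−∑_{i∈S} B (x i))` with respect to `Q`, every coupling `P ≪ Q` with marginals
`μ i` satisfying `∫ B dμ_i < ∞` has a well-defined KL divergence (negative part of the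
log-likelihood ratio integrable) and
`KL(P ‖ Q) = KL(P ‖ Q^B) − ∑_{i∈S} ∫ B dμ_i − log z_B`. -/
theorem kl_change_of_reference
    {S : Type*} [Fintype S] [Nonempty S] (d : ℕ) (hd : 1 ≤ d)
    (Q : Measure (S → Fin d → ℝ)) [SigmaFinite Q]
    (B : (Fin d → ℝ) → ℝ) (hB_meas : Measurable B) (hB_nonneg : ∀ y, 0 ≤ B y)
    (zB : ℝ) (hzB_pos : 0 < zB)
    (hzB : ∫⁻ x, ENNReal.ofReal (Real.exp (-∑ i, B (x i))) ∂Q = ENNReal.ofReal zB)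
    (QB : Measure (S → Fin d → ℝ))
    (hQB : QB = Q.withDensity (fun x => ENNReal.ofReal (zB⁻¹ * Real.exp (-∑ i, B (x i)))))
    (μ : S → Measure (Fin d → ℝ)) [∀ i, IsProbabilityMeasure (μ i)]
    (hB_int : ∀ i, Integrable B (μ i))
    (P : Measure (S → Fin d → ℝ)) [IsProbabilityMeasure P]
    (hac : P ≪ Q)
    (hmarg : ∀ i, P.map (fun x => x i) = μ i) :
    Integrable (fun x => min (llr P Q x) 0) P ∧
      KL P Q = KL P QB - ((∑ i, ∫ y, B y ∂(μ i) : ℝ) : EReal) - ((Real.log zB : ℝ) : EReal) := by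
  -- the tilting function
  set f : (S → Fin d → ℝ) → ℝ := fun x => -∑ i, B (x i) with hf_def
  have hf_meas : Measurable f :=
    (Finset.measurable_sum _ fun i _ => hB_meas.comp (measurable_pi_apply i)).neg
  have hexp_meas : Measurable fun x => Real.exp (f x) := hf_meas.exp
  have h_int_exp : Integrable (fun x => Real.exp (f x)) Q := by
    refine ⟨hexp_meas.aestronglyMeasurable, ?_⟩
    rw [hasFiniteIntegral_iff_ofReal (ae_of_all _ fun x => (Real.exp_pos _).le), hzB]
    exact ENNReal.ofReal_lt_top
  have hI : ∫ x, Real.exp (f x) ∂Q = zB := by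
    have h := ofReal_integral_eq_lintegral_ofReal h_int_exp
      (ae_of_all _ fun x => (Real.exp_pos _).le)
    rw [hzB] at h
    have h_nonneg : 0 ≤ ∫ x, Real.exp (f x) ∂Q :=
      integral_nonneg fun x => (Real.exp_pos _).le
    exact (ENNReal.ofReal_eq_ofReal_iff h_nonneg hzB_pos.le).mp h
  have hQB_tilted : QB = Q.tilted f := by
    rw [hQB, Measure.tilted]
    congr 1
    ext x
    rw [hI, div_eq_inv_mul]
  have hNeZero : NeZero Q := by
    refine ⟨fun h => ?_⟩
    rw [h] at hzB
    simp only [lintegral_zero_measure] at hzB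
    exact absurd hzB.symm (by simp [ENNReal.ofReal_eq_zero, not_le, hzB_pos])
  have hQBprob : IsProbabilityMeasure QB := by
    rw [hQB_tilted]; exact isProbabilityMeasure_tilted h_int_exp
  have hPQB : P ≪ QB := by
    rw [hQB_tilted]; exact hac.trans (absolutelyContinuous_tilted h_int_exp)
  -- the key a.e. identity
  have h_eq : llr P QB =ᵐ[P] fun x => -f x + Real.log zB + llr P Q x := by
    rw [hQB_tilted]
    have := llr_tilted_right hac h_int_exp (μ := P) (ν := Q)
    rw [hI] at this
    exact this
  -- integrability of the sum of B's under P
  have hBi_int : ∀ i : S, Integrable (fun x : S → Fin d → ℝ => B (x i)) P := by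
    intro i
    have h := hB_int i
    rw [← hmarg i] at h
    exact (integrable_map_measure hB_meas.aestronglyMeasurable
      (measurable_pi_apply i).aemeasurable).mp h
  have hW_int : Integrable (fun x : S → Fin d → ℝ => ∑ i, B (x i)) P :=
    integrable_finset_sum _ fun i _ => hBi_int i
  have hnf_int : Integrable (fun x => -f x) P := by
    simp only [hf_def, neg_neg]
    exact hW_int
  have hW_eq : ∫ x, (∑ i, B (x i)) ∂P = ∑ i, ∫ y, B y ∂(μ i) := by
    rw [integral_finset_sum _ fun i _ => hBi_int i]
    refine Finset.sum_congr rfl fun i _ => ?_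
    rw [← hmarg i, integral_map (measurable_pi_apply i).aemeasurable
      hB_meas.aestronglyMeasurable]
  -- negative part of llr P QB is integrable
  have h_min_QB : Integrable (fun x => min (llr P QB x) 0) P := by
    refine ⟨((measurable_llr _ _).min measurable_const).aestronglyMeasurable, ?_⟩
    rw [hasFiniteIntegral_def]
    have hP_eq : P = QB.withDensity (P.rnDeriv QB) :=
      (Measure.withDensity_rnDeriv_eq P QB hPQB).symm
    calc ∫⁻ x, ‖min (llr P QB x) 0‖₊ ∂P
        = ∫⁻ x, (P.rnDeriv QB x) * (‖min (llr P QB x) 0‖₊ : ℝ≥0∞) ∂QB := by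
          nth_rewrite 1 [hP_eq]
          rw [lintegral_withDensity_eq_lintegral_mul _ (Measure.measurable_rnDeriv P QB)
            (((measurable_llr _ _).min measurable_const).nnnorm.coe_nnreal_ennreal)]
          rfl
      _ ≤ ∫⁻ _, 1 ∂QB := by
          refine lintegral_mono_ae ?_
          filter_upwards [Measure.rnDeriv_lt_top P QB] with x hx
          set t : ℝ := (P.rnDeriv QB x).toReal with ht_def
          have ht : 0 ≤ t := ENNReal.toReal_nonneg
          have hrn : P.rnDeriv QB x = ENNReal.ofReal t := by
            rw [ht_def, ENNReal.ofReal_toReal hx.ne]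
          have habs : ‖min (llr P QB x) 0‖ = max (-(Real.log t)) 0 := by
            rw [Real.norm_eq_abs, abs_of_nonpos (min_le_right _ _)]
            rw [llr]
            rcases le_total (Real.log t) 0 with h | h
            · rw [min_eq_left h, max_eq_left (by linarith)]
            · rw [min_eq_right h, max_eq_right (by linarith), neg_zero]
          calc (P.rnDeriv QB x) * (‖min (llr P QB x) 0‖₊ : ℝ≥0∞)
              = ENNReal.ofReal t * ENNReal.ofReal (max (-(Real.log t)) 0) := by
                rw [hrn, ← habs, ofReal_norm_eq_enorm]; rfl
            _ = ENNReal.ofReal (t * max (-(Real.log t)) 0) := by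
                rw [← ENNReal.ofReal_mul ht]
            _ ≤ 1 := by
                rw [← ENNReal.ofReal_one]
                exact ENNReal.ofReal_le_ofReal (aux_mul_max_le ht)
      _ = 1 := by simp
      _ < ⊤ := by simp
  -- rewrite: llr P Q = llr P QB - (-f + log zB) a.e.
  have h_eq' : llr P Q =ᵐ[P] fun x => llr P QB x - (-f x + Real.log zB) := by
    filter_upwards [h_eq] with x hx
    rw [hx]; ring
  have hc_int : Integrable (fun x => -f x + Real.log zB) P :=
    hnf_int.add (integrable_const _)
  -- negative part of llr P Q is integrable
  have h_min_Q : Integrable (fun x => min (llr P Q x) 0) P := by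
    refine Integrable.mono' (h_min_QB.abs.add hc_int.abs)
      ((measurable_llr _ _).min measurable_const).aestronglyMeasurable ?_
    filter_upwards [h_eq'] with x hx
    rw [Real.norm_eq_abs, hx]
    exact aux_abs_min_sub _ _
  refine ⟨h_min_Q, ?_⟩
  -- the integrability equivalence
  have hiff : Integrable (llr P Q) P ↔ Integrable (llr P QB) P := by
    constructor
    · intro h
      rw [integrable_congr h_eq]
      exact hc_int.add h
    · intro h
      rw [integrable_congr h_eq']
      exact h.sub hc_int
  by_cases hint : Integrable (llr P Q) P
  · have hintB := hiff.mp hint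
    rw [KL, KL, if_pos ⟨hac, hint⟩, if_pos ⟨hPQB, hintB⟩]
    have hf_int : Integrable f P := hnf_int.neg.congr (by filter_upwards with x; simp)
    have h1 : ∫ x, llr P QB x ∂P
        = ∫ x, llr P Q x ∂P - ∫ x, f x ∂P + Real.log zB := by
      rw [hQB_tilted, integral_llr_tilted_right hac hf_int h_int_exp hint, hI]
    have h2 : ∫ x, f x ∂P = -(∑ i, ∫ y, B y ∂(μ i)) := by
      rw [hf_def]
      rw [integral_neg, hW_eq]
    have h3 : ∫ x, llr P Q x ∂P
        = ∫ x, llr P QB x ∂P - (∑ i, ∫ y, B y ∂(μ i)) - Real.log zB := by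
      rw [h1, h2]; ring
    rw [h3, ← EReal.coe_sub, ← EReal.coe_sub]
  · have hintB : ¬ Integrable (llr P QB) P := fun h => hint (hiff.mpr h)
    rw [KL, KL, if_neg (fun h => hint h.2), if_neg (fun h => hintB h.2)]
    rw [EReal.top_sub_coe, EReal.top_sub_coe]
end
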